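/- For each 3CNF boolean formula Φ with m conjuncts: Φ is satisfiable if and only if there exists a set of literals S(Φ) ⊆ W(Φ) such that (D(Φ), W(Φ)_{S(Φ)}) ⊨ ¬(S(Φ) ∪ {c₁,…,c_m}), where (D(Φ),W(Φ)) is the NU default theory associated with Φ described in the context. -/

import Mathlib

/-! Propositional formulas -/

inductive Form (V : Type) : Type
  | atom : V → Form V
  | tru  : Form V
  | fals : Form V
  | neg  : Form V → Form V
  | conj : Form V → Form V → Form V
  | disj : Form V → Form V → Form V

/-- Satisfaction of a formula by a valuation. -/
def Form.sat {V : Type} (v : V → Prop) : Form V → Prop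
  | .atom a => v a
  | .tru => True
  | .fals => False
  | .neg φ => ¬ Form.sat v φ
  | .conj φ ψ => Form.sat v φ ∧ Form.sat v ψ
  | .disj φ ψ => Form.sat v φ ∨ Form.sat v ψ

/-- Logical logClosure `T*` of a set of formulas. -/
def logClosure {V : Type} (T : Set (Form V)) : Set (Form V) :=
  { φ | ∀ v : V → Prop, (∀ ψ ∈ T, Form.sat v ψ) → Form.sat v φ }

/-- A default rule `α : β₁,…,β_m / γ` (`pre = none` means the prerequisite is missing). -/
structure Default (V : Type) : Type where
  pre   : Option (Form V)
  justs : List (Form V)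
  concl : Form V

/-- The stage sets `E_i` relative to a candidate extension `E`:
`E_0 = W`, `E_{i+1} = E_i* ∪ {γ | α:β₁,…,β_m/γ ∈ D, α ∈ E_i, ¬β₁ ∉ E, …, ¬β_m ∉ E}`. -/
def extStage {V : Type} (D : Set (Default V)) (W : Set (Form V)) (E : Set (Form V)) :
    ℕ → Set (Form V)
  | 0 => W
  | i + 1 =>
      logClosure (extStage D W E i) ∪
        { φ | ∃ d ∈ D, d.concl = φ ∧ (∀ a ∈ d.pre, a ∈ extStage D W E i) ∧
              ∀ b ∈ d.justs, Form.neg b ∉ E }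

/-- `E` is an extension of the default theory `(D, W)`. -/
def IsExtension {V : Type} (D : Set (Default V)) (W : Set (Form V)) (E : Set (Form V)) : Prop :=
  E = ⋃ i, extStage D W E i

/-- `(D, W) ⊨ φ`: every extension of `(D, W)` contains `φ`. -/
def entails {V : Type} (D : Set (Default V)) (W : Set (Form V)) (φ : Form V) : Prop :=
  ∀ E, IsExtension D W E → φ ∈ E

/-! Literals -/

/-- A literal: a letter together with a sign (`pos = true` means a positive literal). -/
structure Lit (V : Type) : Type where
  letter : V
  pos : Bool

/-- The formula corresponding to a literal. -/
def Lit.toForm {V : Type} (l : Lit V) : Form V :=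
  if l.pos then Form.atom l.letter else Form.neg (Form.atom l.letter)

/-- Negation of a literal (so that `¬¬a = a`). -/
def Lit.negate {V : Type} (l : Lit V) : Lit V := ⟨l.letter, !l.pos⟩

/-- A set of literals is consistent if it contains no complementary pair. -/
def LitConsistent {V : Type} (S : Set (Lit V)) : Prop := ∀ l ∈ S, l.negate ∉ S

/-! Normal mixed unary (NMU) default theories -/

/-- An NMU default `α : β / β` with `α` empty or a single literal and `β` a single literal. -/
structure NMUDefault (V : Type) : Type where
  pre : Option (Lit V)
  concl : Lit V

/-- The general default rule corresponding to an NMU default. -/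
def NMUDefault.toDefault {V : Type} (d : NMUDefault V) : Default V :=
  ⟨d.pre.map Lit.toForm, [d.concl.toForm], d.concl.toForm⟩

/-- `E` is an extension of the NMU theory `(D, W)`. -/
def NMU.IsExtension {V : Type} (D : Set (NMUDefault V)) (W : Set (Lit V))
    (E : Set (Form V)) : Prop :=
  _root_.IsExtension (NMUDefault.toDefault '' D) (Lit.toForm '' W) E

/-- The NMU theory `(D, W)` entails the literal `l`. -/
def NMU.entails {V : Type} (D : Set (NMUDefault V)) (W : Set (Lit V)) (l : Lit V) : Prop :=
  _root_.entails (NMUDefault.toDefault '' D) (Lit.toForm '' W) l.toForm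

/-- An NMU theory is normal unary (NU) if every nonempty prerequisite is positive. -/
def IsNU {V : Type} (D : Set (NMUDefault V)) : Prop :=
  ∀ d ∈ D, ∀ p ∈ d.pre, p.pos = true

/-! Atomic dependency graph -/

/-- Edge `(x, y)` of the atomic dependency graph: `x` occurs in the prerequisite and `y`
in the consequent of some default of `D`. -/
def depEdge {V : Type} (D : Set (NMUDefault V)) (x y : V) : Prop :=
  ∃ d ∈ D, (∃ p ∈ d.pre, p.letter = x) ∧ d.concl.letter = y

/-- There is a path from `x` to `y` in the atomic dependency graph. -/
def depReach {V : Type} (D : Set (NMUDefault V)) : V → V → Prop :=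
  Relation.ReflTransGen (depEdge D)

/-- A set of literals `S` influences a literal `l`. -/
def influences {V : Type} (D : Set (NMUDefault V)) (S : Set (Lit V)) (l : Lit V) : Prop :=
  ∃ t ∈ S, depReach D t.letter l.letter

/-- A 3CNF formula over variables `Fin n` with `m` conjuncts is represented by the
function giving the `k`-th literal of the `j`-th clause. -/
def Sat3 {n m : ℕ} (Φ : Fin m → Fin 3 → Lit (Fin n)) : Prop :=
  ∃ τ : Fin n → Bool, ∀ j : Fin m, ∃ k : Fin 3, τ (Φ j k).letter = (Φ j k).pos

/-- The letters of the theory associated with a 3CNF `Φ`: the variables `xᵢ`,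
the fresh letters `yᵢ` and the fresh letters `c_j`. -/
inductive PhiVar (n m : ℕ) : Type
  | X : Fin n → PhiVar n m
  | Y : Fin n → PhiVar n m
  | C : Fin m → PhiVar n m

/-- `σ(xᵢ) = xᵢ` and `σ(¬xᵢ) = yᵢ`. -/
def sigmaMap {n m : ℕ} (t : Lit (Fin n)) : Lit (PhiVar n m) :=
  if t.pos then ⟨PhiVar.X t.letter, true⟩ else ⟨PhiVar.Y t.letter, true⟩

/-- The defaults `D(Φ) = D₁ ∪ D₂ ∪ D₃`, where
`D₁ = {xᵢ:¬yᵢ/¬yᵢ, :yᵢ/yᵢ}`, `D₂ = {σ(t_{j,k}):¬c_j/¬c_j}` and `D₃ = {:¬xᵢ/¬xᵢ}`. -/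
def DPhi {n m : ℕ} (Φ : Fin m → Fin 3 → Lit (Fin n)) : Set (NMUDefault (PhiVar n m)) :=
  { d | (∃ i, d = ⟨some ⟨PhiVar.X i, true⟩, ⟨PhiVar.Y i, false⟩⟩) ∨
        (∃ i, d = ⟨none, ⟨PhiVar.Y i, true⟩⟩) ∨
        (∃ j k, d = ⟨some (sigmaMap (Φ j k)), ⟨PhiVar.C j, false⟩⟩) ∨
        (∃ i, d = ⟨none, ⟨PhiVar.X i, false⟩⟩) }

/-- `W(Φ) = {x₁, …, xₙ}`. -/
def WPhi (n m : ℕ) : Set (Lit (PhiVar n m)) := { l | ∃ i, l = ⟨PhiVar.X i, true⟩ }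

/-! ### Auxiliary development -/

section Aux

variable {V : Type}

lemma mem_logClosure_self {T : Set (Form V)} {φ : Form V} (h : φ ∈ T) : φ ∈ logClosure T :=
  fun v hv => hv φ h

lemma extStage_succ_mono {D : Set (Default V)} {W E : Set (Form V)} {s : ℕ} :
    extStage D W E s ⊆ extStage D W E (s + 1) :=
  fun _ h => Or.inl (mem_logClosure_self h)

lemma stage_subset_ext {D : Set (Default V)} {W E : Set (Form V)}
    (hE : IsExtension D W E) (s : ℕ) : extStage D W E s ⊆ E := by
  intro φ h; rw [hE]; exact Set.mem_iUnion.2 ⟨s, h⟩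

end Aux

section Main

variable {n m : ℕ}

/-- The subset of `W(Φ)` determined by a predicate `A` on indices. -/
def Wset (n m : ℕ) (A : Fin n → Prop) : Set (Lit (PhiVar n m)) :=
  {l | ∃ i, A i ∧ l = ⟨PhiVar.X i, true⟩}

/-- Canonical valuation associated with an extension `E` of `(D(Φ), Wset A)`. -/
def uval (A : Fin n → Prop) (E : Set (Form (PhiVar n m))) : PhiVar n m → Prop
  | .X i => A i
  | .Y i => ¬ A i ∨ Form.neg (Form.atom (PhiVar.Y i)) ∉ E
  | .C _ => False

lemma uval_models (Φ : Fin m → Fin 3 → Lit (Fin n)) (A : Fin n → Prop)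
    (E : Set (Form (PhiVar n m)))
    (hE : IsExtension (NMUDefault.toDefault '' DPhi Φ) (Lit.toForm '' Wset n m A) E) :
    ∀ φ ∈ E, Form.sat (uval A E) φ := by
  set D' := NMUDefault.toDefault '' DPhi Φ with hD'
  set W' := Lit.toForm '' Wset n m A with hW'
  have key : ∀ s, ∀ φ ∈ extStage D' W' E s, Form.sat (uval A E) φ := by
    intro s
    induction s with
    | zero =>
      rintro φ ⟨l, ⟨i, hA, rfl⟩, rfl⟩
      simpa [Lit.toForm, Form.sat, uval] using hA
    | succ s ih =>
      rintro φ (h | hfired)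
      · exact h (uval A E) ih
      · have hφE : φ ∈ E := by
          refine stage_subset_ext hE (s + 1) (Or.inr hfired)
        obtain ⟨d', ⟨d, hd, rfl⟩, hconcl, hpre, hjust⟩ := hfired
        rcases hd with ⟨i, rfl⟩ | ⟨i, rfl⟩ | ⟨j, k, rfl⟩ | ⟨i, rfl⟩
        · -- x_i : ¬y_i / ¬y_i
          have hx : Form.atom (PhiVar.X i) ∈ extStage D' W' E s := by
            have := hpre (Lit.toForm ⟨PhiVar.X i, true⟩) (by simp [NMUDefault.toDefault])
            simpa [Lit.toForm] using this
          have hAi : A i := by simpa [Form.sat, uval] using ih _ hx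
          subst hconcl
          simp only [NMUDefault.toDefault, Lit.toForm] at hφE ⊢
          simp only [Bool.false_eq_true, if_false] at hφE ⊢
          simp only [Form.sat, uval]
          push_neg
          exact ⟨hAi, by simpa using hφE⟩
        · -- : y_i / y_i
          have hj : Form.neg (Form.atom (PhiVar.Y i)) ∉ E := by
            have := hjust ((⟨PhiVar.Y i, true⟩ : Lit (PhiVar n m)).toForm)
              (by simp [NMUDefault.toDefault])
            simpa [Lit.toForm] using this
          subst hconcl
          simp only [NMUDefault.toDefault, Lit.toForm, if_true]
          simp only [Form.sat, uval]
          exact Or.inr hj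
        · -- σ(t_jk) : ¬c_j / ¬c_j
          subst hconcl
          simp [NMUDefault.toDefault, Lit.toForm, Form.sat, uval]
        · -- : ¬x_i / ¬x_i
          have hj : Form.neg (Form.neg (Form.atom (PhiVar.X i))) ∉ E := by
            have := hjust ((⟨PhiVar.X i, false⟩ : Lit (PhiVar n m)).toForm)
              (by simp [NMUDefault.toDefault])
            simpa [Lit.toForm] using this
          have hAi : ¬ A i := by
            intro hAi
            apply hj
            refine stage_subset_ext hE 1 (Or.inl ?_)
            intro v hv
            have : Form.sat v (Form.atom (PhiVar.X i)) := by
              refine hv _ ⟨⟨PhiVar.X i, true⟩, ⟨i, hAi, rfl⟩, by simp [Lit.toForm]⟩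
            simp [Form.sat] at this ⊢
            exact this
          subst hconcl
          simp only [NMUDefault.toDefault, Lit.toForm]
          simp only [Bool.false_eq_true, if_false]
          simpa [Form.sat, uval] using hAi
  intro φ hφ
  rw [hE] at hφ
  obtain ⟨s, hs⟩ := Set.mem_iUnion.1 hφ
  exact key s φ hs

/-- Clause `j` is satisfied by the assignment described by `A`. -/
def ClauseSat (Φ : Fin m → Fin 3 → Lit (Fin n)) (A : Fin n → Prop) (j : Fin m) : Prop :=
  ∃ k, (A (Φ j k).letter ↔ (Φ j k).pos = true)

/-- Generating literals of the canonical extension. -/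
def Gset (Φ : Fin m → Fin 3 → Lit (Fin n)) (A : Fin n → Prop) : Set (Form (PhiVar n m)) :=
  {φ | (∃ i, A i ∧ φ = Form.atom (PhiVar.X i)) ∨
       (∃ i, ¬ A i ∧ φ = Form.neg (Form.atom (PhiVar.X i))) ∨
       (∃ i, A i ∧ φ = Form.neg (Form.atom (PhiVar.Y i))) ∨
       (∃ i, ¬ A i ∧ φ = Form.atom (PhiVar.Y i)) ∨
       (∃ j, ClauseSat Φ A j ∧ φ = Form.neg (Form.atom (PhiVar.C j)))}

/-- Canonical model of `Gset`. -/
def ustar (Φ : Fin m → Fin 3 → Lit (Fin n)) (A : Fin n → Prop) : PhiVar n m → Prop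
  | .X i => A i
  | .Y i => ¬ A i
  | .C j => ¬ ClauseSat Φ A j

lemma ustar_models (Φ : Fin m → Fin 3 → Lit (Fin n)) (A : Fin n → Prop) :
    ∀ φ ∈ Gset Φ A, Form.sat (ustar Φ A) φ := by
  rintro φ (⟨i, h, rfl⟩ | ⟨i, h, rfl⟩ | ⟨i, h, rfl⟩ | ⟨i, h, rfl⟩ | ⟨j, h, rfl⟩) <;>
    simpa [Form.sat, ustar] using h

lemma Gset_subset_stage2 (Φ : Fin m → Fin 3 → Lit (Fin n)) (A : Fin n → Prop) :
    Gset Φ A ⊆ extStage (NMUDefault.toDefault '' DPhi Φ) (Lit.toForm '' Wset n m A)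
      (logClosure (Gset Φ A)) 2 := by
  set D' := NMUDefault.toDefault '' DPhi Φ
  set W' := Lit.toForm '' Wset n m A
  set E := logClosure (Gset Φ A)
  have hnotin : ∀ ψ : Form (PhiVar n m), ¬ Form.sat (ustar Φ A) ψ → ψ ∉ E := by
    intro ψ hψ hmem
    exact hψ (hmem _ (ustar_models Φ A))
  have hstage0 : ∀ i, A i →
      Form.atom (PhiVar.X i) ∈ extStage D' W' E 0 :=
    fun i hA => ⟨⟨PhiVar.X i, true⟩, ⟨i, hA, rfl⟩, by simp [Lit.toForm]⟩
  have hstage1Y : ∀ i, ¬ A i →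
      Form.atom (PhiVar.Y i) ∈ extStage D' W' E 1 := by
    intro i hA
    refine Or.inr ⟨_, ⟨⟨none, ⟨PhiVar.Y i, true⟩⟩, Or.inr (Or.inl ⟨i, rfl⟩), rfl⟩, ?_, ?_, ?_⟩
    · simp [NMUDefault.toDefault, Lit.toForm]
    · intro a ha; simp [NMUDefault.toDefault] at ha
    · intro b hb
      simp [NMUDefault.toDefault, Lit.toForm] at hb
      subst hb
      exact hnotin _ (by simp [Form.sat, ustar, hA])
  rintro φ (⟨i, h, rfl⟩ | ⟨i, h, rfl⟩ | ⟨i, h, rfl⟩ | ⟨i, h, rfl⟩ | ⟨j, h, rfl⟩)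
  · exact extStage_succ_mono (extStage_succ_mono (hstage0 i h))
  · -- ¬x_i via D₃
    refine extStage_succ_mono (Or.inr ⟨_, ⟨⟨none, ⟨PhiVar.X i, false⟩⟩,
      Or.inr (Or.inr (Or.inr ⟨i, rfl⟩)), rfl⟩, ?_, ?_, ?_⟩)
    · simp [NMUDefault.toDefault, Lit.toForm]
    · intro a ha; simp [NMUDefault.toDefault] at ha
    · intro b hb
      simp [NMUDefault.toDefault, Lit.toForm] at hb
      subst hb
      exact hnotin _ (by simp [Form.sat, ustar, h])
  · -- ¬y_i via D₁
    refine extStage_succ_mono (Or.inr ⟨_, ⟨⟨some ⟨PhiVar.X i, true⟩, ⟨PhiVar.Y i, false⟩⟩,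
      Or.inl ⟨i, rfl⟩, rfl⟩, ?_, ?_, ?_⟩)
    · simp [NMUDefault.toDefault, Lit.toForm]
    · intro a ha
      simp [NMUDefault.toDefault, Lit.toForm] at ha
      subst ha
      exact hstage0 i h
    · intro b hb
      simp [NMUDefault.toDefault, Lit.toForm] at hb
      subst hb
      exact hnotin _ (by simp [Form.sat, ustar, h])
  · exact extStage_succ_mono (hstage1Y i h)
  · -- ¬c_j via D₂
    obtain ⟨k, hk⟩ := h
    refine Or.inr ⟨_, ⟨⟨some (sigmaMap (Φ j k)), ⟨PhiVar.C j, false⟩⟩,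
      Or.inr (Or.inr (Or.inl ⟨j, k, rfl⟩)), rfl⟩, ?_, ?_, ?_⟩
    · simp [NMUDefault.toDefault, Lit.toForm]
    · intro a ha
      simp [NMUDefault.toDefault] at ha
      subst ha
      by_cases hp : (Φ j k).pos = true
      · have hA : A (Φ j k).letter := hk.2 hp
        simp only [sigmaMap, hp, if_true, Lit.toForm]
        exact extStage_succ_mono (hstage0 _ hA)
      · have hA : ¬ A (Φ j k).letter := fun h' => hp (hk.1 h')
        simp only [sigmaMap, hp, if_false, Lit.toForm]
        exact hstage1Y _ hA
    · intro b hb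
      simp [NMUDefault.toDefault, Lit.toForm] at hb
      subst hb
      exact hnotin _ (by simp [Form.sat, ustar]; exact ⟨k, hk⟩)

lemma canonical_isExtension (Φ : Fin m → Fin 3 → Lit (Fin n)) (A : Fin n → Prop) :
    IsExtension (NMUDefault.toDefault '' DPhi Φ) (Lit.toForm '' Wset n m A)
      (logClosure (Gset Φ A)) := by
  set D' := NMUDefault.toDefault '' DPhi Φ
  set W' := Lit.toForm '' Wset n m A
  set E := logClosure (Gset Φ A) with hEdef
  have hGE : ∀ ψ ∈ Gset Φ A, ψ ∈ E := fun ψ h => mem_logClosure_self h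
  have hstage_sub : ∀ s, extStage D' W' E s ⊆ E := by
    intro s
    induction s with
    | zero =>
      rintro φ ⟨l, ⟨i, hA, rfl⟩, rfl⟩
      exact hGE _ (Or.inl ⟨i, hA, by simp [Lit.toForm]⟩)
    | succ s ih =>
      rintro φ (h | ⟨d', ⟨d, hd, rfl⟩, hconcl, hpre, hjust⟩)
      · -- logClosure of stage s entailed by Gset
        intro v hv
        exact h v fun ψ hψ => ih hψ v hv
      · rcases hd with ⟨i, rfl⟩ | ⟨i, rfl⟩ | ⟨j, k, rfl⟩ | ⟨i, rfl⟩
        · -- conclusion ¬y_i ; justification forces A i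
          have hAi : A i := by
            by_contra hA
            refine hjust ((⟨PhiVar.Y i, false⟩ : Lit (PhiVar n m)).toForm)
              (by simp [NMUDefault.toDefault]) ?_
            have hy : Form.atom (PhiVar.Y i) ∈ Gset Φ A := Or.inr (Or.inr (Or.inr (Or.inl ⟨i, hA, rfl⟩)))
            intro v hv
            have := hv _ hy
            simp [Lit.toForm, Form.sat] at this ⊢
            exact this
          subst hconcl
          refine hGE _ (Or.inr (Or.inr (Or.inl ⟨i, hAi, ?_⟩)))
          simp [NMUDefault.toDefault, Lit.toForm]
        · -- conclusion y_i ; justification forces ¬ A i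
          have hAi : ¬ A i := by
            intro hA
            refine hjust ((⟨PhiVar.Y i, true⟩ : Lit (PhiVar n m)).toForm)
              (by simp [NMUDefault.toDefault]) ?_
            simp only [Lit.toForm, if_true]
            exact hGE _ (Or.inr (Or.inr (Or.inl ⟨i, hA, rfl⟩)))
          subst hconcl
          refine hGE _ (Or.inr (Or.inr (Or.inr (Or.inl ⟨i, hAi, ?_⟩))))
          simp [NMUDefault.toDefault, Lit.toForm]
        · -- conclusion ¬c_j ; prerequisite forces clause sat
          have hsig : (sigmaMap (Φ j k) : Lit (PhiVar n m)).toForm ∈ E := by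
            refine ih (hpre _ ?_)
            simp [NMUDefault.toDefault]
          have hcs : ClauseSat Φ A j := by
            have hs := hsig _ (ustar_models Φ A)
            by_cases hp : (Φ j k).pos = true
            · simp only [sigmaMap, hp, if_true, Lit.toForm] at hs
              simp only [Form.sat, ustar] at hs
              exact ⟨k, by simp [hs, hp]⟩
            · simp only [sigmaMap, hp, if_false, Lit.toForm, Bool.false_eq_true,
                Form.sat, ustar] at hs
              exact ⟨k, by simp [Form.sat, ustar] at hs; simp [hs, hp]⟩
          subst hconcl
          refine hGE _ (Or.inr (Or.inr (Or.inr (Or.inr ⟨j, hcs, ?_⟩))))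
          simp [NMUDefault.toDefault, Lit.toForm]
        · -- conclusion ¬x_i ; justification forces ¬ A i
          have hAi : ¬ A i := by
            intro hA
            refine hjust ((⟨PhiVar.X i, false⟩ : Lit (PhiVar n m)).toForm)
              (by simp [NMUDefault.toDefault]) ?_
            have hx : Form.atom (PhiVar.X i) ∈ Gset Φ A := Or.inl ⟨i, hA, rfl⟩
            intro v hv
            have := hv _ hx
            simp [Lit.toForm, Form.sat] at this ⊢
            exact this
          subst hconcl
          refine hGE _ (Or.inr (Or.inl ⟨i, hAi, ?_⟩))
          simp [NMUDefault.toDefault, Lit.toForm]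
  apply Set.Subset.antisymm
  · intro φ hφ
    refine Set.mem_iUnion.2 ⟨3, Or.inl ?_⟩
    intro v hv
    exact hφ v fun ψ hψ => hv ψ (Gset_subset_stage2 Φ A hψ)
  · intro φ hφ
    obtain ⟨s, hs⟩ := Set.mem_iUnion.1 hφ
    exact hstage_sub s hs

end Main

/-- Lemma: `Φ` is satisfiable iff there is a set of literals `S(Φ) ⊆ W(Φ)` such that
`(D(Φ), W(Φ)_{S(Φ)}) ⊨ ¬(S(Φ) ∪ {c₁, …, c_m})`. -/
theorem sat_iff_witness_entailment {n m : ℕ} (Φ : Fin m → Fin 3 → Lit (Fin n)) :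
    Sat3 Φ ↔
      ∃ S : Set (Lit (PhiVar n m)), S ⊆ WPhi n m ∧
        ∀ l ∈ S ∪ { l : Lit (PhiVar n m) | ∃ j, l = ⟨PhiVar.C j, true⟩ },
          NMU.entails (DPhi Φ) (WPhi n m \ S) l.negate := by
  classical
  constructor
  · rintro ⟨τ, hτ⟩
    set A : Fin n → Prop := fun i => τ i = true with hA
    set S : Set (Lit (PhiVar n m)) := {l | ∃ i, τ i = false ∧ l = ⟨PhiVar.X i, true⟩} with hSdef
    have hW : WPhi n m \ S = Wset n m A := by
      ext l
      constructor
      · rintro ⟨⟨i, rfl⟩, hnS⟩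
        refine ⟨i, ?_, rfl⟩
        by_contra h
        refine hnS ⟨i, ?_, rfl⟩
        rw [hA] at h
        simpa using h
      · rintro ⟨i, hAi, rfl⟩
        refine ⟨⟨i, rfl⟩, ?_⟩
        rintro ⟨i', hi', heq⟩
        have : i' = i := by simpa [Lit.mk.injEq, PhiVar.X.injEq] using heq.symm
        subst this
        simp [hA] at hAi
        simp [hi'] at hAi
    refine ⟨S, ?_, ?_⟩
    · rintro l ⟨i, _, rfl⟩; exact ⟨i, rfl⟩
    · intro l hl E hE
      rw [hW] at hE
      have hmodels := uval_models Φ A E hE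
      set D' := NMUDefault.toDefault '' DPhi Φ
      set W' := Lit.toForm '' Wset n m A
      have hsubE : ∀ s, extStage D' W' E s ⊆ E := stage_subset_ext hE
      have hCnot : ∀ j : Fin m,
          Form.neg ((⟨PhiVar.C j, false⟩ : Lit (PhiVar n m)).toForm) ∉ E := by
        intro j hmem
        have := hmodels _ hmem
        simp [Lit.toForm, Form.sat, uval] at this
      have hstage1Y : ∀ i, ¬ A i →
          Form.atom (PhiVar.Y i) ∈ extStage D' W' E 1 := by
        intro i hAi
        refine Or.inr ⟨_, ⟨⟨none, ⟨PhiVar.Y i, true⟩⟩, Or.inr (Or.inl ⟨i, rfl⟩), rfl⟩,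
          ?_, ?_, ?_⟩
        · simp [NMUDefault.toDefault, Lit.toForm]
        · intro a ha; simp [NMUDefault.toDefault] at ha
        · intro b hb
          simp [NMUDefault.toDefault, Lit.toForm] at hb
          subst hb
          intro hmem
          have := hmodels _ hmem
          simp [Form.sat, uval] at this
          exact hAi this.1
      rcases hl with hl | ⟨j, rfl⟩
      · -- l ∈ S : show ¬x_i ∈ E
        obtain ⟨i, hti, rfl⟩ := hl
        have hAi : ¬ A i := by simp [hA, hti]
        refine hsubE 1 (Or.inr ⟨_, ⟨⟨none, ⟨PhiVar.X i, false⟩⟩,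
          Or.inr (Or.inr (Or.inr ⟨i, rfl⟩)), rfl⟩, ?_, ?_, ?_⟩)
        · simp [NMUDefault.toDefault, Lit.toForm, Lit.negate]
        · intro a ha; simp [NMUDefault.toDefault] at ha
        · intro b hb
          simp [NMUDefault.toDefault, Lit.toForm] at hb
          subst hb
          intro hmem
          have := hmodels _ hmem
          simp [Form.sat, uval] at this
          exact hAi this
      · -- l = c_j : show ¬c_j ∈ E
        obtain ⟨k, hk⟩ := hτ j
        by_cases hp : (Φ j k).pos = true
        · have hAk : A (Φ j k).letter := by simp [hA, hk, hp]
          refine hsubE 1 (Or.inr ⟨_, ⟨⟨some (sigmaMap (Φ j k)), ⟨PhiVar.C j, false⟩⟩,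
            Or.inr (Or.inr (Or.inl ⟨j, k, rfl⟩)), rfl⟩, ?_, ?_, ?_⟩)
          · simp [NMUDefault.toDefault, Lit.toForm, Lit.negate]
          · intro a ha
            simp [NMUDefault.toDefault] at ha
            subst ha
            simp only [sigmaMap, hp, if_true, Lit.toForm]
            exact ⟨⟨PhiVar.X (Φ j k).letter, true⟩, ⟨_, hAk, rfl⟩, by simp [Lit.toForm]⟩
          · intro b hb
            simp [NMUDefault.toDefault, Lit.toForm] at hb
            subst hb
            exact hCnot j
        · have hAk : ¬ A (Φ j k).letter := by
            simp only [Bool.not_eq_true] at hp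
            simp [hA, hk, hp]
          refine hsubE 2 (Or.inr ⟨_, ⟨⟨some (sigmaMap (Φ j k)), ⟨PhiVar.C j, false⟩⟩,
            Or.inr (Or.inr (Or.inl ⟨j, k, rfl⟩)), rfl⟩, ?_, ?_, ?_⟩)
          · simp [NMUDefault.toDefault, Lit.toForm, Lit.negate]
          · intro a ha
            simp [NMUDefault.toDefault] at ha
            subst ha
            simp only [sigmaMap, hp, if_false, Lit.toForm, Bool.false_eq_true]
            exact hstage1Y _ hAk
          · intro b hb
            simp [NMUDefault.toDefault, Lit.toForm] at hb
            subst hb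
            exact hCnot j
  · rintro ⟨S, hS, hent⟩
    set A : Fin n → Prop := fun i => (⟨PhiVar.X i, true⟩ : Lit (PhiVar n m)) ∉ S with hA
    have hW : WPhi n m \ S = Wset n m A := by
      ext l
      constructor
      · rintro ⟨⟨i, rfl⟩, hnS⟩
        exact ⟨i, hnS, rfl⟩
      · rintro ⟨i, hAi, rfl⟩
        exact ⟨⟨i, rfl⟩, hAi⟩
    have hext := canonical_isExtension Φ A
    rw [← hW] at hext
    refine ⟨fun i => decide (A i), ?_⟩
    intro j
    have hCj := hent ⟨PhiVar.C j, true⟩ (Or.inr ⟨j, rfl⟩) _ hext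
    have hsat := hCj _ (ustar_models Φ A)
    have hcs : ClauseSat Φ A j := by
      simpa [Lit.negate, Lit.toForm, Form.sat, ustar] using hsat
    obtain ⟨k, hk⟩ := hcs
    refine ⟨k, ?_⟩
    by_cases hp : (Φ j k).pos = true
    · have := hk.2 hp
      simp only [hp, decide_eq_true_eq]
      exact this
    · simp only [Bool.not_eq_true] at hp
      have h2 : ¬ A (Φ j k).letter := fun h => by simp [hk.1 h] at hp
      simp only [hp, decide_eq_false_iff_not]
      exact h2
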